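/- (Gronwall-type bound for the integral equation) Let v be holomorphic on the closed disk |z - z₀| ≤ R and satisfy v(z) = a + b(z-z₀) - (1/2)∫_{z₀}^{z} (z-ξ)p(ξ)v(ξ)dξ along radial segments, where p is holomorphic with |p| ≤ M on the disk. Then |v(z)| ≤ (|a| + |b|R)·exp((1/2)M R |z - z₀|) for |z - z₀| ≤ R. -/

import Mathlib

open Set intervalIntegral


/-- Gronwall-type bound for the Volterra integral equation
v(z) = a + b(z-z₀) - (1/2)∫_{z₀}^z (z-ξ)p(ξ)v(ξ)dξ (integral along the radial segment):
if |p| ≤ M on the closed disk of radius R, then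
|v(z)| ≤ (|a| + |b|R)·exp((1/2)MR|z-z₀|). -/
theorem gronwall_volterra (z₀ : ℂ) (R : ℝ) (hR : 0 < R) (a b : ℂ) (M : ℝ)
    (p v : ℂ → ℂ)
    (hp : DifferentiableOn ℂ p (Metric.closedBall z₀ R))
    (hM : ∀ ξ ∈ Metric.closedBall z₀ R, ‖p ξ‖ ≤ M)
    (hv : DifferentiableOn ℂ v (Metric.closedBall z₀ R))
    (heq : ∀ z ∈ Metric.closedBall z₀ R,
      v z = a + b * (z - z₀) - (1 / 2) * ((z - z₀) *
        ∫ t in (0:ℝ)..1, (1 - (t : ℂ)) * (z - z₀) *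
          p (z₀ + (t : ℂ) * (z - z₀)) * v (z₀ + (t : ℂ) * (z - z₀)))) :
    ∀ z ∈ Metric.closedBall z₀ R,
      ‖v z‖ ≤ (‖a‖ + ‖b‖ * R) *
        Real.exp ((1 / 2) * M * R * ‖z - z₀‖) := by
  intro z hz
  set r : ℝ := ‖z - z₀‖ with hrdef
  have hr0 : 0 ≤ r := norm_nonneg _
  have hrR : r ≤ R := by
    rw [Metric.mem_closedBall, Complex.dist_eq] at hz
    exact hz
  have hM0 : 0 ≤ M :=
    le_trans (norm_nonneg _) (hM z₀ (Metric.mem_closedBall_self hR.le))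
  set C : ℝ := ‖a‖ + ‖b‖ * R with hCdef
  have hC0 : 0 ≤ C := by positivity
  set K : ℝ := (1/2) * M * R * r with hKdef
  have hK0 : 0 ≤ K := by positivity
  -- parametrization
  set γ : ℝ → ℂ := fun s => z₀ + (s:ℂ) * (z - z₀) with hγdef
  have hγmem : ∀ s ∈ Icc (0:ℝ) 1, γ s ∈ Metric.closedBall z₀ R := by
    intro s hs
    have h1 : ‖(s:ℂ) * (z - z₀)‖ = s * r := by
      rw [norm_mul, Complex.norm_real, Real.norm_eq_abs, abs_of_nonneg hs.1]
    simp only [Metric.mem_closedBall, hγdef, Complex.dist_eq, add_sub_cancel_left, h1]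
    nlinarith [hs.1, hs.2]
  -- clamp
  set c : ℝ → ℝ := fun s => max 0 (min 1 s) with hcdef
  have hc : Continuous c := continuous_const.max (continuous_const.min continuous_id)
  have hcmem : ∀ s, c s ∈ Icc (0:ℝ) 1 := fun s =>
    ⟨le_max_left _ _, max_le zero_le_one (min_le_left _ _)⟩
  have hceq : ∀ s ∈ Icc (0:ℝ) 1, c s = s := by
    intro s hs
    simp [hcdef, min_eq_right hs.2, max_eq_right hs.1]
  have hγc : Continuous fun s => γ (c s) := by
    apply Continuous.add continuous_const
    exact (Complex.continuous_ofReal.comp hc).mul continuous_const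
  have hγcmem : ∀ s, γ (c s) ∈ Metric.closedBall z₀ R := fun s => hγmem _ (hcmem s)
  -- clamped composed functions
  set V : ℝ → ℂ := fun s => v (γ (c s)) with hVdef
  set P : ℝ → ℂ := fun s => p (γ (c s)) with hPdef
  have hVc : Continuous V := hv.continuousOn.comp_continuous hγc hγcmem
  have hPc : Continuous P := hp.continuousOn.comp_continuous hγc hγcmem
  set f : ℝ → ℝ := fun s => ‖V s‖ with hfdef
  have hfc : Continuous f := continuous_norm.comp hVc
  have hf0 : ∀ s, 0 ≤ f s := fun s => norm_nonneg _
  set F : ℝ → ℝ := fun s => ∫ u in (0:ℝ)..s, f u with hFdef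
  have hF0 : ∀ s, 0 ≤ s → 0 ≤ F s := by
    intro s hs
    exact intervalIntegral.integral_nonneg hs (fun u _ => hf0 u)
  -- key integral inequality
  have key : ∀ s ∈ Icc (0:ℝ) 1, f s ≤ C + K * F s := by
    intro s hs
    have hsr : s * r ≤ R := by nlinarith [hs.1, hs.2]
    have hsr0 : 0 ≤ s * r := mul_nonneg hs.1 hr0
    have hw : γ s ∈ Metric.closedBall z₀ R := hγmem s hs
    have hwz : γ s - z₀ = (s:ℂ) * (z - z₀) := by simp [hγdef]
    have habs2 : ‖(s:ℂ) * (z - z₀)‖ = s * r := by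
      rw [norm_mul, Complex.norm_real, Real.norm_eq_abs, abs_of_nonneg hs.1]
    -- rewrite the integral in terms of P, V
    have hIcongr : (∫ t in (0:ℝ)..1, (1 - (t : ℂ)) * ((s:ℂ) * (z - z₀)) *
          p (z₀ + (t : ℂ) * ((s:ℂ) * (z - z₀))) * v (z₀ + (t : ℂ) * ((s:ℂ) * (z - z₀))))
        = ∫ t in (0:ℝ)..1, (1 - (t : ℂ)) * ((s:ℂ) * (z - z₀)) * P (t*s) * V (t*s) := by
      apply intervalIntegral.integral_congr
      intro t ht
      rw [Set.uIcc_of_le zero_le_one] at ht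
      have hts : t * s ∈ Icc (0:ℝ) 1 := by
        constructor
        · exact mul_nonneg ht.1 hs.1
        · nlinarith [ht.1, ht.2, hs.1, hs.2]
      have harg : z₀ + (t : ℂ) * ((s:ℂ) * (z - z₀)) = γ (c (t*s)) := by
        rw [hceq _ hts, hγdef]
        push_cast
        ring
      simp only [hPdef, hVdef, ← harg]
    have hVeq : v (γ s) = V s := by
      simp only [hVdef]; rw [hceq s hs]
    -- pointwise bound on the integrand
    have hptbound : ∀ t ∈ Icc (0:ℝ) 1,
        ‖(1 - (t : ℂ)) * ((s:ℂ) * (z - z₀)) * P (t*s) * V (t*s)‖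
          ≤ (s * r) * M * f (t*s) := by
      intro t ht
      have h1t : ‖1 - (t:ℂ)‖ ≤ 1 := by
        have h2 : (1:ℂ) - (t:ℂ) = ((1 - t : ℝ) : ℂ) := by push_cast; ring
        rw [h2, Complex.norm_real, Real.norm_eq_abs, abs_of_nonneg (by linarith [ht.2])]
        linarith [ht.1]
      have hPb : ‖P (t*s)‖ ≤ M := hM _ (hγcmem _)
      rw [norm_mul, norm_mul, norm_mul, habs2]
      have step : ‖1 - (t:ℂ)‖ * (s * r) * ‖P (t*s)‖ * ‖V (t*s)‖
          ≤ 1 * (s * r) * M * ‖V (t*s)‖ := by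
        gcongr
      calc ‖1 - (t:ℂ)‖ * (s * r) * ‖P (t*s)‖ * ‖V (t*s)‖
          ≤ 1 * (s * r) * M * ‖V (t*s)‖ := step
        _ = (s * r) * M * f (t*s) := by simp only [hfdef]; ring
    -- norm of the integral
    have hsub : (∫ t in (0:ℝ)..1, f (t*s)) * s = F s := by
      have h3 := intervalIntegral.smul_integral_comp_mul_right f (a := 0) (b := 1) s
      simp only [smul_eq_mul, zero_mul, one_mul] at h3
      show (∫ t in (0:ℝ)..1, f (t*s)) * s = ∫ u in (0:ℝ)..s, f u
      rw [← h3]; ring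
    have hcontI : Continuous fun t : ℝ =>
        (1 - (t : ℂ)) * ((s:ℂ) * (z - z₀)) * P (t*s) * V (t*s) :=
      (((continuous_const.sub Complex.continuous_ofReal).mul continuous_const).mul
        (hPc.comp (continuous_id.mul continuous_const))).mul
        (hVc.comp (continuous_id.mul continuous_const))
    have hnormI : ‖∫ t in (0:ℝ)..1,
          (1 - (t : ℂ)) * ((s:ℂ) * (z - z₀)) * P (t*s) * V (t*s)‖
        ≤ r * M * F s := by
      calc ‖∫ t in (0:ℝ)..1,
            (1 - (t : ℂ)) * ((s:ℂ) * (z - z₀)) * P (t*s) * V (t*s)‖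
          ≤ ∫ t in (0:ℝ)..1,
              ‖(1 - (t : ℂ)) * ((s:ℂ) * (z - z₀)) * P (t*s) * V (t*s)‖ := by
            exact intervalIntegral.norm_integral_le_integral_norm zero_le_one
        _ ≤ ∫ t in (0:ℝ)..1, (s * r) * M * f (t*s) := by
            apply intervalIntegral.integral_mono_on zero_le_one
            · exact (continuous_norm.comp hcontI).intervalIntegrable _ _
            · exact (continuous_const.mul
                (hfc.comp (continuous_id.mul continuous_const))).intervalIntegrable _ _
            · exact hptbound
        _ = r * M * ((∫ t in (0:ℝ)..1, f (t*s)) * s) := by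
            rw [intervalIntegral.integral_const_mul]; ring
        _ = r * M * F s := by rw [hsub]
    -- put it together
    have hvw := heq (γ s) hw
    rw [hwz] at hvw
    rw [hIcongr, hVeq] at hvw
    have hFs := hF0 s hs.1
    calc f s = ‖a + b * ((s:ℂ) * (z - z₀)) - (1 / 2) * (((s:ℂ) * (z - z₀)) *
          ∫ t in (0:ℝ)..1, (1 - (t : ℂ)) * ((s:ℂ) * (z - z₀)) * P (t*s) * V (t*s))‖ := by
          show ‖V s‖ = _
          rw [hvw]
      _ ≤ ‖a + b * ((s:ℂ) * (z - z₀))‖ + ‖(1 / 2) * (((s:ℂ) * (z - z₀)) *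
          ∫ t in (0:ℝ)..1, (1 - (t : ℂ)) * ((s:ℂ) * (z - z₀)) * P (t*s) * V (t*s))‖ := by
          apply norm_sub_le
      _ ≤ (‖a‖ + ‖b‖ * (s * r)) + (1/2) * ((s * r) * (r * M * F s)) := by
          apply add_le_add
          · refine le_trans (norm_add_le _ _) ?_
            rw [norm_mul, habs2]
          · rw [norm_mul, norm_mul, habs2]
            have : ‖(1:ℂ)/2‖ = 1/2 := by
              rw [norm_div, norm_one, Complex.norm_two]
            rw [this]
            apply mul_le_mul le_rfl _ (by positivity) (by norm_num)
            exact mul_le_mul le_rfl hnormI (norm_nonneg _) hsr0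
      _ ≤ C + K * F s := by
          rw [hCdef, hKdef]
          have h4 : ‖b‖ * (s * r) ≤ ‖b‖ * R :=
            mul_le_mul le_rfl hsr hsr0 (norm_nonneg _)
          have h5' : (s * r) * (r * (M * F s)) ≤ R * (r * (M * F s)) :=
            mul_le_mul_of_nonneg_right hsr (by positivity)
          have h5 : (1/2) * ((s * r) * (r * M * F s)) ≤ (1/2) * M * R * r * F s := by
            nlinarith [h5']
          linarith
  -- Gronwall via the antiderivative F
  have hFderiv : ∀ s : ℝ, HasDerivAt F (f s) s := by
    intro s
    exact intervalIntegral.integral_hasDerivAt_right (hfc.intervalIntegrable _ _)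
      (hfc.stronglyMeasurableAtFilter _ _) hfc.continuousAt
  have hgron : ∀ s ∈ Icc (0:ℝ) 1, ‖F s‖ ≤ gronwallBound 0 K C (s - 0) := by
    apply norm_le_gronwallBound_of_norm_deriv_right_le
      (fun s _ => (hFderiv s).continuousAt.continuousWithinAt)
      (fun s _ => (hFderiv s).hasDerivWithinAt)
    · simp [hFdef]
    · intro s hs
      have hFs := hF0 s hs.1
      rw [Real.norm_eq_abs, abs_of_nonneg (hf0 s), Real.norm_eq_abs, abs_of_nonneg hFs]
      have := key s ⟨hs.1, hs.2.le⟩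
      linarith
  have hF1 : F 1 ≤ gronwallBound 0 K C 1 := by
    have := hgron 1 ⟨zero_le_one, le_rfl⟩
    rwa [Real.norm_eq_abs, abs_of_nonneg (hF0 1 zero_le_one), sub_zero] at this
  have hfinal : f 1 ≤ C * Real.exp K := by
    have h6 := key 1 ⟨zero_le_one, le_rfl⟩
    have h7 : K * F 1 ≤ K * gronwallBound 0 K C 1 := mul_le_mul_of_nonneg_left hF1 hK0
    have h8 : C + K * gronwallBound 0 K C 1 ≤ C * Real.exp K := by
      rcases eq_or_lt_of_le hK0 with hK | hK
      · rw [← hK]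
        simp [gronwallBound_K0]
      · simp only [gronwallBound_of_K_ne_0 hK.ne', zero_mul, zero_add, mul_one]
        have h9 : K * (C / K * (Real.exp K - 1)) = C * (Real.exp K - 1) := by
          field_simp
        rw [h9, mul_sub, mul_one]
        linarith
    linarith
  have hγ1 : γ (c 1) = z := by
    rw [hceq 1 ⟨zero_le_one, le_rfl⟩]
    simp [hγdef]
  have hfz : f 1 = ‖v z‖ := by
    simp only [hfdef, hVdef, hγ1]
  rw [← hfz]
  exact hfinal
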